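/- Let n be a positive integer, let r be a real number with 0 < r < n, and let B ⊆ ℝⁿ be a Borel set with 0 < H^r(B) < ∞. Then B can be covered by cov(N) many H^r-null sets, where cov(N) is the least cardinality of a family of Lebesgue null subsets of ℝⁿ whose union is ℝⁿ. That is, there is a family of H^r-null sets of cardinality at most cov(N) whose union contains B. -/

import Mathlib

open MeasureTheory Set
open scoped ENNReal MeasureTheory

noncomputable section


/-- `covOf J` is the least cardinality of a subfamily of `J` whose union is everything. -/
def covOf {α : Type*} (J : Set (Set α)) : Cardinal :=
  sInf { c : Cardinal | ∃ S ⊆ J, ⋃₀ S = univ ∧ Cardinal.mk S = c }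

open ProbabilityTheory Filter Topology in
/-- The cdf of an atomless probability measure on `ℝ` pushes it forward to the uniform
measure on `(0, 1]`. -/
lemma map_cdf_eq_restrict (ν : Measure ℝ) [IsProbabilityMeasure ν] [NullSingletonClass ν] :
    Measure.map (cdf ν) ν = volume.restrict (Ioc (0:ℝ) 1) := by
  have hFm : Measurable (cdf ν) := (monotone_cdf ν).measurable
  haveI : IsProbabilityMeasure (Measure.map (cdf ν) ν) :=
    Measure.isProbabilityMeasure_map hFm.aemeasurable
  refine Measure.ext_of_Iic _ _ (fun y => ?_)
  rw [Measure.map_apply hFm measurableSet_Iic, Measure.restrict_apply measurableSet_Iic]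
  have hset : Iic y ∩ Ioc (0:ℝ) 1 = Ioc 0 (min y 1) := by
    ext x
    simp only [mem_inter_iff, mem_Iic, mem_Ioc, le_min_iff]
    constructor
    · rintro ⟨h1, h2, h3⟩; exact ⟨h2, h1, h3⟩
    · rintro ⟨h1, h2, h3⟩; exact ⟨h2, h1, h3⟩
  rw [hset, Real.volume_Ioc]
  rcases lt_or_ge y 0 with hy | hy0
  · have hempty : cdf ν ⁻¹' Iic y = ∅ :=
      eq_empty_of_forall_notMem fun x hx =>
        absurd (le_trans (cdf_nonneg ν x) hx) (not_le.2 hy)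
    rw [hempty, measure_empty, eq_comm, ENNReal.ofReal_eq_zero]
    have := min_le_left y 1
    linarith
  rcases le_or_gt 1 y with hy1 | hy1
  · have huniv : cdf ν ⁻¹' Iic y = univ :=
      eq_univ_of_forall fun x => le_trans (cdf_le_one ν x) hy1
    rw [huniv, measure_univ, min_eq_right hy1]
    norm_num
  -- now `0 ≤ y < 1`
  rw [min_eq_left hy1.le, sub_zero]
  rcases eq_empty_or_nonempty (cdf ν ⁻¹' Iic y) with hne | hne
  · have hy0' : y ≤ 0 := by
      refine ge_of_tendsto' (tendsto_cdf_atBot ν) fun x => ?_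
      by_contra h
      push_neg at h
      have hxmem : x ∈ (cdf ν : ℝ → ℝ) ⁻¹' Iic y := h.le
      rw [hne] at hxmem
      exact absurd hxmem (notMem_empty x)
    have : y = 0 := le_antisymm hy0' hy0
    rw [hne, measure_empty, this]
    simp
  · have hbdd : BddAbove (cdf ν ⁻¹' Iic y) := by
      obtain ⟨x₁, hx₁⟩ := ((tendsto_cdf_atTop ν).eventually (eventually_gt_nhds hy1)).exists
      exact ⟨x₁, fun z hz =>
        le_of_not_gt fun h => absurd (le_trans ((monotone_cdf ν) h.le) hz) (not_le.2 hx₁)⟩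
    set c := sSup (cdf ν ⁻¹' Iic y) with hc
    have hIio_s : Iio c ⊆ cdf ν ⁻¹' Iic y := fun x hx => by
      obtain ⟨z, hz, hxz⟩ := exists_lt_of_lt_csSup hne hx
      exact le_trans ((monotone_cdf ν) hxz.le) hz
    have hs_Iic : cdf ν ⁻¹' Iic y ⊆ Iic c := fun z hz => le_csSup hbdd hz
    have hν_eq : ν (Iio c) = ν (Iic c) := measure_congr Iio_ae_eq_Iic
    have hIic_val : ν (Iic c) = ENNReal.ofReal (cdf ν c) := (ofReal_cdf ν c).symm
    have h1 : ν (cdf ν ⁻¹' Iic y) = ENNReal.ofReal (cdf ν c) := by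
      refine le_antisymm (hIic_val ▸ measure_mono hs_Iic) ?_
      calc ENNReal.ofReal (cdf ν c) = ν (Iio c) := by rw [hν_eq, hIic_val]
        _ ≤ ν (cdf ν ⁻¹' Iic y) := measure_mono hIio_s
    have hcy_le : cdf ν c ≤ y := by
      have hsing : ENNReal.ofReal (cdf ν c - Function.leftLim (cdf ν) c) = 0 := by
        rw [← StieltjesFunction.measure_singleton, measure_cdf]
        exact measure_singleton c
      have h2 : cdf ν c ≤ Function.leftLim (cdf ν) c := by
        have := ENNReal.ofReal_eq_zero.1 hsing
        linarith
      have h3 : Function.leftLim (cdf ν) c ≤ y := by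
        have ht : Tendsto (cdf ν) (𝓝[<] c) (𝓝 (Function.leftLim (cdf ν) c)) :=
          (monotone_cdf ν).tendsto_leftLim c
        exact le_of_tendsto ht (eventually_nhdsWithin_of_forall fun x hx => hIio_s hx)
      linarith
    have hcy_ge : y ≤ cdf ν c := by
      have ht : Tendsto (cdf ν) (𝓝[>] c) (𝓝 (cdf ν c)) :=
        ((cdf ν).right_continuous c).tendsto.mono_left (nhdsWithin_mono c Ioi_subset_Ici_self)
      refine ge_of_tendsto ht (eventually_nhdsWithin_of_forall fun x hx => ?_)
      by_contra h
      push_neg at h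
      exact absurd (hs_Iic h.le) (not_le.2 hx : ¬ x ≤ c)
    rw [h1, le_antisymm hcy_le hcy_ge]

open ProbabilityTheory Filter Topology in
/-- A Borel set of positive finite `H^r`-measure can be covered by `cov(N)` many
`H^r`-null sets, where `N` is the ideal of Lebesgue null subsets of `ℝⁿ`. -/
theorem stmt3 (n : ℕ) (r : ℝ) (hn : 1 ≤ n) (hr0 : 0 < r) (hrn : r < n)
    (B : Set (EuclideanSpace ℝ (Fin n))) (hB : MeasurableSet B)
    (hpos : 0 < μH[r] B) (hfin : μH[r] B < ⊤) :
    ∃ S : Set (Set (EuclideanSpace ℝ (Fin n))),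
      (∀ A ∈ S, μH[r] A = 0) ∧
      Cardinal.mk S ≤ covOf {A : Set (EuclideanSpace ℝ (Fin n)) | volume A = 0} ∧
      B ⊆ ⋃₀ S := by
  classical
  haveI : Nonempty (Fin n) := ⟨⟨0, hn⟩⟩
  haveI hnt : Nontrivial (EuclideanSpace ℝ (Fin n)) := by
    set i : Fin n := ⟨0, hn⟩ with hi
    set v : EuclideanSpace ℝ (Fin n) := EuclideanSpace.single i (1 : ℝ) with hv
    refine ⟨0, v, fun h => ?_⟩
    have h0 : (0 : EuclideanSpace ℝ (Fin n)) i = v i := congrArg (fun w : EuclideanSpace ℝ (Fin n) => w i) h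
    rw [hv, EuclideanSpace.single_apply, if_pos rfl] at h0
    exact one_ne_zero (h0.symm.trans rfl)
  haveI : NullSingletonClass (volume : Measure (EuclideanSpace ℝ (Fin n))) := inferInstance
  haveI hHatom : NullSingletonClass (μH[r] : Measure (EuclideanSpace ℝ (Fin n))) :=
    Measure.noAtoms_hausdorff _ hr0
  -- the covering number is attained by some family `S₀`
  have hCne : { c : Cardinal |
      ∃ S ⊆ {A : Set (EuclideanSpace ℝ (Fin n)) | volume A = 0}, ⋃₀ S = univ ∧
        Cardinal.mk S = c }.Nonempty := by
    refine ⟨_, {A : Set (EuclideanSpace ℝ (Fin n)) | ∃ x, A = {x}}, ?_, ?_, rfl⟩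
    · rintro A ⟨x, rfl⟩
      exact measure_singleton x
    · ext x
      simp only [mem_sUnion, mem_univ, iff_true]
      exact ⟨{x}, ⟨x, rfl⟩, rfl⟩
  obtain ⟨S₀, hS₀J, hS₀U, hS₀c⟩ := csInf_mem hCne
  -- the normalized restricted Hausdorff measure
  set μB : Measure (EuclideanSpace ℝ (Fin n)) :=
    (μH[r] B)⁻¹ • (μH[r] : Measure (EuclideanSpace ℝ (Fin n))).restrict B with hμB
  haveI : IsProbabilityMeasure μB := by
    constructor
    rw [hμB, Measure.smul_apply, Measure.restrict_apply_univ, smul_eq_mul]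
    exact ENNReal.inv_mul_cancel hpos.ne' hfin.ne
  haveI : NullSingletonClass μB := by
    constructor
    intro x
    rw [hμB, Measure.smul_apply, Measure.restrict_apply' hB, smul_eq_mul]
    have h0 : μH[r] ({x} ∩ B) = 0 :=
      le_antisymm (le_trans (measure_mono inter_subset_left)
        (le_of_eq (measure_singleton x))) zero_le
    rw [h0, mul_zero]
  -- a probability measure equivalent to the Lebesgue measure on `ℝⁿ`
  obtain ⟨P₀, hP₀fin, hacVP, hacPV⟩ :=
    exists_isFiniteMeasure_absolutelyContinuous (volume : Measure (EuclideanSpace ℝ (Fin n)))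
  haveI := hP₀fin
  have hP₀pos : P₀ univ ≠ 0 := by
    intro h
    have hv0 : (volume : Measure (EuclideanSpace ℝ (Fin n))) univ = 0 :=
      hacVP (measure_mono_null (subset_univ _) h)
    exact absurd hv0 (isOpen_univ.measure_pos volume univ_nonempty).ne'
  set P : Measure (EuclideanSpace ℝ (Fin n)) := (P₀ univ)⁻¹ • P₀ with hP
  haveI : IsProbabilityMeasure P := by
    constructor
    rw [hP, Measure.smul_apply, smul_eq_mul]
    exact ENNReal.inv_mul_cancel hP₀pos (measure_ne_top _ _)
  have hPnull : ∀ {s : Set (EuclideanSpace ℝ (Fin n))}, volume s = 0 → P s = 0 := by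
    intro s hs
    rw [hP, Measure.smul_apply, smul_eq_mul, hacPV hs, mul_zero]
  -- a measurable equivalence with ℝ
  have hEunc : ¬ Countable (EuclideanSpace ℝ (Fin n)) := by
    intro h
    have hinj : Function.Injective
        (fun t : ℝ => (EuclideanSpace.single (⟨0, hn⟩ : Fin n) t : EuclideanSpace ℝ (Fin n))) := by
      intro a b hab
      have h1 : (EuclideanSpace.single (⟨0, hn⟩ : Fin n) a : EuclideanSpace ℝ (Fin n)) ⟨0, hn⟩
          = (EuclideanSpace.single (⟨0, hn⟩ : Fin n) b : EuclideanSpace ℝ (Fin n)) ⟨0, hn⟩ :=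
        congrArg (fun w : EuclideanSpace ℝ (Fin n) => w ⟨0, hn⟩) hab
      rwa [EuclideanSpace.single_apply, if_pos rfl, EuclideanSpace.single_apply, if_pos rfl] at h1
    have : Countable ℝ := hinj.countable
    exact (not_countable (α := ℝ)) this
  have hRunc : ¬ Countable ℝ := not_countable (α := ℝ)
  set φ : EuclideanSpace ℝ (Fin n) ≃ᵐ ℝ :=
    PolishSpace.measurableEquivOfNotCountable hEunc hRunc with hφ
  -- push both measures to ℝ
  set ν : Measure ℝ := Measure.map φ μB with hν
  haveI : IsProbabilityMeasure ν := Measure.isProbabilityMeasure_map φ.measurable.aemeasurable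
  have hpre_singleton : ∀ x : ℝ, φ ⁻¹' {x} = {φ.symm x} := by
    intro x
    ext z
    simp only [mem_preimage, mem_singleton_iff]
    constructor
    · intro hz; rw [← hz, φ.symm_apply_apply]
    · intro hz; rw [hz, φ.apply_symm_apply]
  haveI : NullSingletonClass ν := by
    constructor
    intro x
    rw [hν, φ.map_apply, hpre_singleton x]
    exact measure_singleton _
  set Pν : Measure ℝ := Measure.map φ P with hPν
  haveI : IsProbabilityMeasure Pν := Measure.isProbabilityMeasure_map φ.measurable.aemeasurable
  haveI : NullSingletonClass Pν := by
    constructor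
    intro x
    rw [hPν, φ.map_apply, hpre_singleton x]
    exact hPnull (measure_singleton _)
  set F : StieltjesFunction ℝ := cdf ν with hF
  set G : StieltjesFunction ℝ := cdf Pν with hG
  -- the quantile function of `Pν`
  set Q : ℝ → ℝ := fun u => sInf {x : ℝ | u ≤ G x} with hQ
  have hGmono : Monotone (G : ℝ → ℝ) := monotone_cdf Pν
  have hQne : ∀ u : ℝ, u < 1 → {x : ℝ | u ≤ G x}.Nonempty := by
    intro u hu
    obtain ⟨x, hx⟩ := ((tendsto_cdf_atTop Pν).eventually (eventually_gt_nhds hu)).exists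
    exact ⟨x, hx.le⟩
  have hQbdd : ∀ u : ℝ, 0 < u → BddBelow {x : ℝ | u ≤ G x} := by
    intro u hu
    obtain ⟨x₂, hx₂⟩ := ((tendsto_cdf_atBot Pν).eventually (eventually_lt_nhds hu)).exists
    refine ⟨x₂, fun z hz => ?_⟩
    by_contra h
    push_neg at h
    exact absurd (lt_of_le_of_lt (le_trans hz (hGmono h.le)) hx₂) (lt_irrefl u)
  have hQiff : ∀ u : ℝ, u ∈ Ioo (0:ℝ) 1 → ∀ x : ℝ, Q u ≤ x ↔ u ≤ G x := by
    intro u hu x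
    constructor
    · intro h
      have hforall : ∀ x' ∈ Ioi x, u ≤ G x' := by
        intro x' hx'
        obtain ⟨z, hz, hzx⟩ := exists_lt_of_csInf_lt (hQne u hu.2) (lt_of_le_of_lt h hx')
        exact le_trans hz (hGmono hzx.le)
      have ht : Tendsto (G : ℝ → ℝ) (𝓝[>] x) (𝓝 (G x)) :=
        (G.right_continuous x).tendsto.mono_left (nhdsWithin_mono x Ioi_subset_Ici_self)
      exact ge_of_tendsto ht (eventually_nhdsWithin_of_forall hforall)
    · intro h
      exact csInf_le (hQbdd u hu.1) h
  have hQmono : MonotoneOn Q (Ioo (0:ℝ) 1) := by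
    intro u hu u' hu' huu'
    exact le_csInf (hQne u' hu'.2) fun x hx => csInf_le (hQbdd u hu.1) (le_trans huu' hx)
  -- `Q` pushes the uniform measure on `(0,1)` forward to `Pν`
  have hQae : AEMeasurable Q (volume.restrict (Ioo (0:ℝ) 1)) :=
    aemeasurable_restrict_of_monotoneOn measurableSet_Ioo hQmono
  haveI : IsFiniteMeasure (volume.restrict (Ioo (0:ℝ) 1)) := by
    constructor
    rw [Measure.restrict_apply_univ, Real.volume_Ioo]
    exact ENNReal.ofReal_lt_top
  haveI : IsFiniteMeasure (Measure.map Q (volume.restrict (Ioo (0:ℝ) 1))) := by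
    constructor
    rw [Measure.map_apply_of_aemeasurable hQae MeasurableSet.univ, preimage_univ]
    exact measure_lt_top _ _
  have hQmap : Measure.map Q (volume.restrict (Ioo (0:ℝ) 1)) = Pν := by
    refine Measure.ext_of_Iic _ _ (fun x => ?_)
    rw [Measure.map_apply_of_aemeasurable hQae measurableSet_Iic,
      Measure.restrict_apply' measurableSet_Ioo, ← ofReal_cdf Pν x]
    rcases le_or_gt 1 (G x) with hGx | hGx
    · have hset : Q ⁻¹' Iic x ∩ Ioo (0:ℝ) 1 = Ioo (0:ℝ) 1 := by
        refine inter_eq_right.2 fun u hu => ?_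
        exact (hQiff u hu x).2 (le_trans hu.2.le hGx)
      have hGx1 : (G : ℝ → ℝ) x = 1 := le_antisymm (cdf_le_one Pν x) hGx
      rw [hset, Real.volume_Ioo, hGx1]
      norm_num
    · have hset : Q ⁻¹' Iic x ∩ Ioo (0:ℝ) 1 = Ioc (0:ℝ) (G x) := by
        ext u
        simp only [mem_inter_iff, mem_preimage, mem_Iic, mem_Ioo, mem_Ioc]
        constructor
        · rintro ⟨h1, h2, h3⟩
          exact ⟨h2, (hQiff u ⟨h2, h3⟩ x).1 h1⟩
        · rintro ⟨h1, h2⟩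
          have hu1 : u < 1 := lt_of_le_of_lt h2 hGx
          exact ⟨(hQiff u ⟨h1, hu1⟩ x).2 h2, h1, hu1⟩
      rw [hset, Real.volume_Ioc, sub_zero]
  -- the transport map
  set g : EuclideanSpace ℝ (Fin n) → EuclideanSpace ℝ (Fin n) :=
    fun z => φ.symm (Q (F (φ z))) with hg
  -- preimages of Lebesgue-null sets under `g` are `H^r`-null inside `B`
  have key : ∀ A : Set (EuclideanSpace ℝ (Fin n)), volume A = 0 → μH[r] (g ⁻¹' A ∩ B) = 0 := by
    intro A hA
    obtain ⟨A', hAA', hA'm, hA'0⟩ := exists_measurable_superset_of_null hA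
    -- `A''` is the corresponding `Pν`-null set in `ℝ`
    set A'' : Set ℝ := φ.symm ⁻¹' A' with hA''
    have hA''m : MeasurableSet A'' := φ.symm.measurable hA'm
    have hA''0 : Pν A'' = 0 := by
      rw [hPν, φ.map_apply, hA'']
      have : φ ⁻¹' (φ.symm ⁻¹' A') = A' := by
        ext z
        simp only [mem_preimage, φ.symm_apply_apply]
      rw [this]
      exact hPnull hA'0
    -- pull back through `Q` : a null set for the uniform measure on `(0,1)`
    have hQ0 : volume.restrict (Ioo (0:ℝ) 1) (Q ⁻¹' A'') = 0 := by
      rw [← Measure.map_apply_of_aemeasurable hQae hA''m, hQmap]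
      exact hA''0
    obtain ⟨T, hQT, hTm, hT0⟩ := exists_measurable_superset_of_null hQ0
    rw [Measure.restrict_apply hTm] at hT0
    -- pull back through `F` : a `ν`-null set
    have hT0' : ν ((F : ℝ → ℝ) ⁻¹' T) = 0 := by
      have : ν ((F : ℝ → ℝ) ⁻¹' T) = Measure.map (F : ℝ → ℝ) ν T :=
        (Measure.map_apply (monotone_cdf ν).measurable hTm).symm
      rw [this, ← hF] at *
      rw [map_cdf_eq_restrict ν, Measure.restrict_apply hTm] at this ⊢
      have hsub : T ∩ Ioc (0:ℝ) 1 ⊆ (T ∩ Ioo (0:ℝ) 1) ∪ {1} := by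
        rintro z ⟨hz1, hz2, hz3⟩
        rcases lt_or_eq_of_le hz3 with h | h
        · exact Or.inl ⟨hz1, hz2, h⟩
        · exact Or.inr (by simp [h])
      refine le_antisymm (le_trans (measure_mono hsub) ?_) zero_le
      refine le_trans (measure_union_le _ _) ?_
      rw [hT0, Real.volume_singleton, add_zero]
    -- pull back through `φ` : a `μB`-null set
    have hμB0 : μB (g ⁻¹' A') = 0 := by
      have hsub : g ⁻¹' A' ⊆ φ ⁻¹' ((F : ℝ → ℝ) ⁻¹' T) := by
        intro z hz
        have : Q (F (φ z)) ∈ A'' := by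
          simp only [hA'', mem_preimage]
          exact hz
        exact hQT this
      refine le_antisymm (le_trans (measure_mono hsub) ?_) zero_le
      rw [← φ.map_apply, ← hν, hT0']
    -- conclude
    have hres : (μH[r] : Measure (EuclideanSpace ℝ (Fin n))).restrict B (g ⁻¹' A') = 0 := by
      rw [hμB, Measure.smul_apply, smul_eq_mul] at hμB0
      have hinv : (μH[r] B)⁻¹ ≠ 0 := ENNReal.inv_ne_zero.2 hfin.ne
      rcases mul_eq_zero.1 hμB0 with h | h
      · exact absurd h hinv
      · exact h
    rw [Measure.restrict_apply' hB] at hres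
    have hsub2 : g ⁻¹' A ∩ B ⊆ g ⁻¹' A' ∩ B :=
      inter_subset_inter_left _ (preimage_mono hAA')
    exact le_antisymm (le_trans (measure_mono hsub2) (le_of_eq hres)) zero_le
  refine ⟨(fun A => g ⁻¹' A ∩ B) '' S₀, ?_, ?_, ?_⟩
  · rintro A ⟨A₀, hA₀, rfl⟩
    exact key A₀ (hS₀J hA₀)
  · exact le_of_le_of_eq Cardinal.mk_image_le hS₀c
  · intro x hx
    have hgx : g x ∈ ⋃₀ S₀ := by rw [hS₀U]; trivial
    obtain ⟨A₀, hA₀, hfx⟩ := hgx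
    exact ⟨g ⁻¹' A₀ ∩ B, ⟨A₀, hA₀, rfl⟩, hfx, hx⟩
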